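/- arXiv:1812.07330 — 2 statements merged into one kernel-verified Lean document; each statement's English description precedes it below -/
import Mathlib

section
/- The k-binomial equivalence relation is a congruence: if u1 ∼_k u2 and v1 ∼_k v2, then u1·v1 ∼_k u2·v2. -/
/-- Number of occurrences of the second word as a (scattered) subword of the first. -/
def binom {α : Type*} [DecidableEq α] : List α → List α → ℕ
  | _, [] => 1
  | [], _ :: _ => 0
  | a :: u, b :: v => binom u (b :: v) + if a = b then binom u v else 0

/-- k-binomial equivalence. -/
def BinEq {α : Type*} [DecidableEq α] (k : ℕ) (u v : List α) : Prop :=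
  ∀ x : List α, x.length ≤ k → binom u x = binom v x

lemma binom_nil_right {α : Type*} [DecidableEq α] (w : List α) : binom w [] = 1 := by
  cases w <;> rfl

lemma binom_append {α : Type*} [DecidableEq α] (u v x : List α) :
    binom (u ++ v) x = ∑ i ∈ Finset.range (x.length + 1),
      binom u (x.take i) * binom v (x.drop i) := by
  induction u generalizing x with
  | nil =>
    cases x with
    | nil => simp [binom_nil_right]
    | cons b t =>
      rw [Finset.sum_range_succ']
      simp [binom, List.take_succ_cons]
  | cons a u ih =>
    cases x with
    | nil => simp [binom_nil_right]
    | cons b t =>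
      have h1 : binom ((a :: u) ++ v) (b :: t)
          = binom (u ++ v) (b :: t) + if a = b then binom (u ++ v) t else 0 := rfl
      rw [h1, ih, ih]
      simp only [List.length_cons]
      rw [Finset.sum_range_succ' (n := t.length + 1),
        Finset.sum_range_succ' (n := t.length + 1)]
      simp only [List.take_succ_cons, List.drop_succ_cons, List.take_zero, List.drop_zero,
        binom_nil_right, one_mul, List.length_cons]
      have h2 : ∀ i : ℕ, binom (a :: u) (b :: t.take i)
          = binom u (b :: t.take i) + if a = b then binom u (t.take i) else 0 := fun _ => rfl
      simp only [h2, add_mul]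
      rw [Finset.sum_add_distrib]
      split
      · ring
      · simp

theorem binEq_congruence {α : Type*} [DecidableEq α] (k : ℕ) (u₁ u₂ v₁ v₂ : List α)
    (hu : BinEq k u₁ u₂) (hv : BinEq k v₁ v₂) : BinEq k (u₁ ++ v₁) (u₂ ++ v₂) := by
  intro x hx
  rw [binom_append, binom_append]
  refine Finset.sum_congr rfl fun i _ => ?_
  rw [hu (x.take i) (le_trans (by simp) hx), hv (x.drop i) (le_trans (by simp) hx)]
end

section
/- Cancellation property: for all words u, v, w and all k ≥ 1, v ∼_k w if and only if u·v ∼_k u·w, and also v ∼_k w if and only if v·u ∼_k w·u. -/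
lemma binom_nil {α : Type*} [DecidableEq α] (u : List α) : binom u [] = 1 := by
  cases u <;> rfl

lemma binom_cons_cons {α : Type*} [DecidableEq α] (a b : α) (u v : List α) :
    binom (a :: u) (b :: v) = binom u (b :: v) + if a = b then binom u v else 0 := rfl

theorem binEq_cancel {α : Type*} [DecidableEq α] (k : ℕ) (hk : 1 ≤ k) (u v w : List α) :
    (BinEq k v w ↔ BinEq k (u ++ v) (u ++ w)) ∧
    (BinEq k v w ↔ BinEq k (v ++ u) (w ++ u)) := by
  constructor
  · constructor
    · intro H x hx
      rw [binom_append, binom_append]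
      refine Finset.sum_congr rfl fun i hi => ?_
      rw [H (x.drop i) (le_trans (by simp) hx)]
    · intro H
      have key : ∀ n (x : List α), x.length ≤ n → x.length ≤ k → binom v x = binom w x := by
        intro n
        induction n with
        | zero =>
          intro x hx _
          rw [List.length_eq_zero_iff.mp (Nat.le_zero.mp hx), binom_nil, binom_nil]
        | succ n ih =>
          intro x hxn hxk
          have hH := H x hxk
          rw [binom_append, binom_append, Finset.sum_range_succ', Finset.sum_range_succ'] at hH
          simp only [List.take_zero, List.drop_zero, binom_nil, one_mul] at hH
          have heq : ∀ i ∈ Finset.range x.length,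
              binom u (x.take (i+1)) * binom v (x.drop (i+1))
                = binom u (x.take (i+1)) * binom w (x.drop (i+1)) := by
            intro i hi
            rw [ih (x.drop (i+1)) (by simp; omega) (le_trans (by simp) hxk)]
          rw [Finset.sum_congr rfl heq] at hH
          exact Nat.add_left_cancel hH
      intro x hx
      exact key x.length x le_rfl hx
  · constructor
    · intro H x hx
      rw [binom_append, binom_append]
      refine Finset.sum_congr rfl fun i hi => ?_
      rw [H (x.take i) (le_trans (by simp) hx)]
    · intro H
      have key : ∀ n (x : List α), x.length ≤ n → x.length ≤ k → binom v x = binom w x := by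
        intro n
        induction n with
        | zero =>
          intro x hx _
          rw [List.length_eq_zero_iff.mp (Nat.le_zero.mp hx), binom_nil, binom_nil]
        | succ n ih =>
          intro x hxn hxk
          have hH := H x hxk
          rw [binom_append, binom_append, Finset.sum_range_succ, Finset.sum_range_succ] at hH
          simp only [List.take_length, List.drop_length, binom_nil, mul_one] at hH
          have heq : ∀ i ∈ Finset.range x.length,
              binom v (x.take i) * binom u (x.drop i)
                = binom w (x.take i) * binom u (x.drop i) := by
            intro i hi
            simp only [Finset.mem_range] at hi
            rw [ih (x.take i) (by simp; omega) (by simp; omega)]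
          rw [Finset.sum_congr rfl heq] at hH
          exact Nat.add_left_cancel hH
      intro x hx
      exact key x.length x le_rfl hx
end
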